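/- For all sufficiently large positive integers n, n! · ∫_{−∞}^{∞} |Γ((e^{n} − n) + it)/Γ((e^{n} + 1) + it)| dt ≤ e^{−n}, where Γ denotes the complex Gamma function. -/

import Mathlib

open Complex Finset MeasureTheory Real

lemma gamma_shift (m : ℕ) : ∀ (s : ℂ), 0 < s.re →
    Complex.Gamma (s + (m + 1 : ℕ)) = (∏ k ∈ Finset.range (m+1), (s + k)) * Complex.Gamma s := by
  induction m with
  | zero =>
    intro s hs
    have hne : s ≠ 0 := fun h => by simp [h] at hs
    simp [Complex.Gamma_add_one s hne]
  | succ m ih =>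
    intro s hs
    have h1 : (s + (m + 1 : ℕ)).re > 0 := by
      simp only [Complex.add_re, Complex.natCast_re]
      positivity
    have hne : s + (m + 1 : ℕ) ≠ 0 := by
      intro h
      rw [h] at h1
      simp at h1
    have h2 : (s + ((m + 1) + 1 : ℕ)) = (s + (m + 1 : ℕ)) + 1 := by push_cast; ring
    rw [h2, Complex.Gamma_add_one _ hne, ih s hs]
    conv_rhs => rw [Finset.prod_range_succ]
    push_cast
    ring

lemma prod_lb (a t : ℝ) (ha : 1 ≤ a) (m : ℕ) :
    a^(m+1) * (1+t^2) ≤ ∏ k ∈ Finset.range (m+3),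
      ‖(a:ℂ) + t*Complex.I + k‖ := by
  set f : ℕ → ℝ := fun k => ‖(a:ℂ) + t*Complex.I + k‖ with hf
  have hre : ∀ k : ℕ, ((a:ℂ) + t*Complex.I + k).re = a + k := by
    intro k; simp
  have him : ∀ k : ℕ, ((a:ℂ) + t*Complex.I + k).im = t := by
    intro k; simp
  have hfk : ∀ k : ℕ, a ≤ f k := by
    intro k
    calc a ≤ a + k := by nlinarith [Nat.cast_nonneg (α := ℝ) k]
    _ = ((a:ℂ) + t*Complex.I + k).re := (hre k).symm
    _ ≤ f k := Complex.re_le_norm _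
  have hsq : ∀ k : ℕ, f k ^ 2 = (a+k)^2 + t^2 := by
    intro k
    rw [hf]
    simp only []
    rw [Complex.sq_norm, Complex.normSq_apply, hre, him]
    ring
  have hf0 : (0:ℝ) ≤ f 0 := by linarith [hfk 0]
  have hf1 : (0:ℝ) ≤ f 1 := by linarith [hfk 1]
  have h01 : 1 + t^2 ≤ f 0 * f 1 := by
    have h0 : f 0 ^ 2 = a^2 + t^2 := by rw [hsq 0]; push_cast; ring
    have h1 : f 1 ^ 2 = (a+1)^2 + t^2 := by rw [hsq 1]; push_cast; ring
    have hle : f 0 ≤ f 1 := by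
      rw [← pow_le_pow_iff_left₀ hf0 hf1 (two_ne_zero), h0, h1]
      nlinarith
    nlinarith
  rw [Finset.prod_range_succ', Finset.prod_range_succ']
  have hmain : a^(m+1) ≤ ∏ i ∈ Finset.range (m+1), f (i+1+1) := by
    calc a^(m+1) = ∏ _i ∈ Finset.range (m+1), a := by
          rw [Finset.prod_const, Finset.card_range]
    _ ≤ ∏ i ∈ Finset.range (m+1), f (i+1+1) :=
        Finset.prod_le_prod (fun _ _ => by linarith) (fun i _ => hfk _)
  have hprodnn : (0:ℝ) ≤ ∏ i ∈ Finset.range (m+1), f (i+1+1) :=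
    Finset.prod_nonneg (fun i _ => by linarith [hfk (i+1+1)])
  calc a^(m+1) * (1+t^2) ≤ (∏ i ∈ Finset.range (m+1), f (i+1+1)) * (f 0 * f 1) := by
        apply mul_le_mul hmain h01 (by positivity) hprodnn
  _ = ((∏ i ∈ Finset.range (m+1), f (i+1+1)) * f 1) * f 0 := by
        rw [mul_comm (f 0) (f 1), ← mul_assoc]
/-- The vertical-line contribution to the Nörlund–Rice integral is exponentially
small: for all sufficiently large `n`,
`n! ∫_ℝ |Γ(eⁿ - n + it)/Γ(eⁿ + 1 + it)| dt ≤ e^{-n}`. -/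
theorem gamma_ratio_line_integral_small :
    ∃ N : ℕ, ∀ n : ℕ, N ≤ n →
      (Nat.factorial n : ℝ) *
        (∫ t : ℝ, ‖
          (Complex.Gamma ((Real.exp n - n : ℝ) + t * Complex.I) /
            Complex.Gamma ((Real.exp n + 1 : ℝ) + t * Complex.I))‖) ≤
        Real.exp (-(n : ℝ)) := by
  refine ⟨16, fun n hn => ?_⟩
  obtain ⟨m, rfl⟩ : ∃ m, n = m + 2 := ⟨n - 2, by omega⟩
  set n := m + 2 with hndef
  set nn : ℝ := (n : ℝ) with hnn
  have hnn16 : (16:ℝ) ≤ nn := by show (16:ℝ) ≤ (n:ℝ); exact_mod_cast hn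
  set a : ℝ := Real.exp nn - nn with hadef
  -- a ≥ exp(nn - 1) ≥ 1
  have hexp1 : (2.7:ℝ) ≤ Real.exp 1 := by
    have := Real.exp_one_gt_d9; linarith
  have hsplit : Real.exp nn = Real.exp (nn - 1) * Real.exp 1 := by
    rw [← Real.exp_add]; congr 1; ring
  have hen1 : nn ≤ Real.exp (nn - 1) := by
    have := Real.add_one_le_exp (nn - 1); linarith
  have haexp : Real.exp (nn - 1) ≤ a := by
    have hpos := Real.exp_pos (nn - 1)
    rw [hadef, hsplit]; nlinarith
  have ha1 : (1:ℝ) ≤ a := by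
    have := Real.exp_pos (nn - 1); nlinarith
  have ha0 : (0:ℝ) < a := by linarith
  clear_value n nn a
  -- the point s(t) and its real part
  have hre : ∀ t : ℝ, ((a:ℂ) + t * Complex.I).re = a := by intro t; simp
  have hrepos : ∀ t : ℝ, 0 < ((a:ℂ) + t * Complex.I).re := fun t => by
    rw [hre]; exact ha0
  -- pointwise identity for the integrand
  set F : ℝ → ℝ := fun t => (∏ k ∈ Finset.range (m+3),
      ‖(a:ℂ) + t * Complex.I + k‖)⁻¹ with hF
  have hid : ∀ t : ℝ, ‖Complex.Gamma ((a:ℂ) + (t:ℂ) * Complex.I) /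
      Complex.Gamma (((Real.exp nn + 1 : ℝ) : ℂ) + (t:ℂ) * Complex.I)‖ = F t := by
    intro t
    have e2 : ((Real.exp nn + 1 : ℝ) : ℂ) + (t:ℂ) * Complex.I
        = ((a:ℂ) + (t:ℂ) * Complex.I) + ((m+2) + 1 : ℕ) := by
      have h : Real.exp nn + 1 = a + ((m+2)+1 : ℕ) := by
        rw [hadef, hnn, hndef]; push_cast; ring
      rw [h]; push_cast; ring
    rw [e2, gamma_shift (m+2) _ (hrepos t), div_mul_eq_div_div_swap,
      div_self (Complex.Gamma_ne_zero_of_re_pos (hrepos t)), one_div, norm_inv,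
      norm_prod]
  -- bound F
  have hFnn : ∀ t : ℝ, 0 ≤ F t := by
    intro t
    apply inv_nonneg.2
    exact Finset.prod_nonneg fun k _ => norm_nonneg _
  have hbound : ∀ t : ℝ, F t ≤ (a^(m+1))⁻¹ * (1 + t^2)⁻¹ := by
    intro t
    rw [hF, ← mul_inv]
    apply inv_anti₀ (by positivity)
    exact prod_lb a t ha1 m
  -- continuity and integrability of F
  have hFcont : Continuous F := by
    apply Continuous.inv₀
    · apply continuous_finset_prod
      intro k _
      exact continuous_norm.comp (by continuity)
    · intro t
      have h := prod_lb a t ha1 m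
      have : (0:ℝ) < a^(m+1) * (1+t^2) := by positivity
      exact ne_of_gt (lt_of_lt_of_le this h)
  have hGint : MeasureTheory.Integrable
      (fun t : ℝ => (a^(m+1))⁻¹ * (1 + t^2)⁻¹) :=
    (integrable_inv_one_add_sq).const_mul _
  have hFint : MeasureTheory.Integrable F := by
    apply hGint.mono' hFcont.aestronglyMeasurable
    filter_upwards with t
    rw [Real.norm_eq_abs, _root_.abs_of_nonneg (hFnn t)]
    exact hbound t
  -- integral bound
  have hint : (∫ t : ℝ, F t) ≤ (a^(m+1))⁻¹ * Real.pi := by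
    calc (∫ t : ℝ, F t) ≤ ∫ t : ℝ, (a^(m+1))⁻¹ * (1 + t^2)⁻¹ :=
          MeasureTheory.integral_mono hFint hGint hbound
    _ = (a^(m+1))⁻¹ * ∫ t : ℝ, (1 + t^2)⁻¹ := MeasureTheory.integral_const_mul _ _
    _ = (a^(m+1))⁻¹ * Real.pi := by rw [integral_univ_inv_one_add_sq]
  -- replace the integral in the goal
  simp only [hid]
  -- now arithmetic
  have hfacnn : (0:ℝ) ≤ (Nat.factorial n : ℝ) := Nat.cast_nonneg _
  have hintnn : 0 ≤ ∫ t : ℝ, F t := MeasureTheory.integral_nonneg hFnn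
  calc (Nat.factorial n : ℝ) * ∫ t : ℝ, F t
      ≤ (Nat.factorial n : ℝ) * ((a^(m+1))⁻¹ * Real.pi) :=
        mul_le_mul_of_nonneg_left hint hfacnn
  _ ≤ Real.exp (-nn) := by
      -- key: n! * π * exp nn ≤ a^(m+1)
      have hpow : Real.exp ((nn-1) * (m+1)) ≤ a^(m+1) := by
        calc Real.exp ((nn-1) * (m+1)) = Real.exp (nn-1) ^ (m+1) := by
              rw [← Real.exp_nat_mul]; congr 1; push_cast; ring
        _ ≤ a^(m+1) := pow_le_pow_left₀ (Real.exp_pos _).le haexp _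
      have hnlt : nn ≤ Real.exp (nn / 2) := by
        have h4 : 1 + nn/4 ≤ Real.exp (nn/4) := by
          have := Real.add_one_le_exp (nn/4); linarith
        have : Real.exp (nn/2) = Real.exp (nn/4) ^ 2 := by
          rw [← Real.exp_nat_mul]; congr 1; push_cast; ring
        nlinarith [Real.exp_pos (nn/4)]
      have hfacle : (Nat.factorial n : ℝ) ≤ Real.exp (nn^2/2) := by
        calc (Nat.factorial n : ℝ) ≤ (n:ℝ)^n := by
              exact_mod_cast Nat.factorial_le_pow n
        _ = nn^n := by rw [hnn]
        _ ≤ Real.exp (nn/2) ^ n := pow_le_pow_left₀ (by linarith) hnlt _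
        _ = Real.exp (nn^2/2) := by
              rw [← Real.exp_nat_mul]; congr 1; rw [hnn]; ring
      have hpi : Real.pi ≤ Real.exp 2 := by
        have h2 : Real.exp 2 = Real.exp 1 ^ 2 := by
          rw [← Real.exp_nat_mul]; norm_num
        nlinarith [Real.pi_le_four]
      have hkey : (Nat.factorial n : ℝ) * Real.pi * Real.exp nn ≤ a^(m+1) := by
        calc (Nat.factorial n : ℝ) * Real.pi * Real.exp nn
            ≤ Real.exp (nn^2/2) * Real.exp 2 * Real.exp nn := by
              apply mul_le_mul_of_nonneg_right _ (Real.exp_pos nn).le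
              apply mul_le_mul hfacle hpi Real.pi_pos.le (Real.exp_pos _).le
        _ = Real.exp (nn^2/2 + 2 + nn) := by rw [← Real.exp_add, ← Real.exp_add]
        _ ≤ Real.exp ((nn-1) * (m+1)) := by
              apply Real.exp_le_exp.2
              have hm : (m:ℝ) + 1 = nn - 1 := by rw [hnn, hndef]; push_cast; ring
              rw [hm]
              have h1 : 16*nn ≤ nn*nn := mul_le_mul_of_nonneg_right hnn16 (by linarith)
              have h3 : nn^2 = nn*nn := sq nn
              have h4 : (nn-1)*(nn-1) = nn*nn - 2*nn + 1 := by ring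
              linarith [h1, h3, h4]
        _ ≤ a^(m+1) := hpow
      have hap : (0:ℝ) < a^(m+1) := by positivity
      rw [Real.exp_neg]
      calc (Nat.factorial n : ℝ) * ((a^(m+1))⁻¹ * Real.pi)
          = ((Nat.factorial n : ℝ) * Real.pi * Real.exp nn)
              * ((a^(m+1))⁻¹ * (Real.exp nn)⁻¹) := by
            field_simp
      _ ≤ a^(m+1) * ((a^(m+1))⁻¹ * (Real.exp nn)⁻¹) :=
            mul_le_mul_of_nonneg_right hkey (by positivity)
      _ = (Real.exp nn)⁻¹ := by field_simp
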